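/- Let G be a group generated by elements a, b, c with a² = abc = 1 (so a = a⁻¹ and c = b⁻¹a⁻¹). Then the elements aba, b, c² satisfy (aba)·b·c² = 1, and the subgroup H := ⟨aba, b, c²⟩ has index at most 2 in G. If moreover a has order exactly 2, b order exactly 3, and c order exactly 8, then aba has order 3, b has order 3, and c² has order 4. -/

import Mathlib

theorem index_two_subgroup_of_238 (G : Type*) [Group G] (a b c : G)
    (hgen : Subgroup.closure {a, b, c} = ⊤)
    (ha : a ^ 2 = 1) (habc : a * b * c = 1) :
    (a * b * a) * b * c ^ 2 = 1 ∧
    (Subgroup.closure {a * b * a, b, c ^ 2}).index ≤ 2 ∧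
    (orderOf a = 2 → orderOf b = 3 → orderOf c = 8 →
      orderOf (a * b * a) = 3 ∧ orderOf b = 3 ∧ orderOf (c ^ 2) = 4) := by
  have haa : a * a = 1 := by rw [← sq]; exact ha
  have hinv : a⁻¹ = a := inv_eq_of_mul_eq_one_right haa
  have hc : c = b⁻¹ * a := by
    have h1 : c = (a * b)⁻¹ := eq_inv_of_mul_eq_one_right habc
    rw [h1, mul_inv_rev, hinv]
  set H := Subgroup.closure {a * b * a, b, c ^ 2} with hH
  have hmem1 : a * b * a ∈ H := Subgroup.subset_closure (by simp)
  have hmem2 : b ∈ H := Subgroup.subset_closure (by simp)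
  have hmem3 : c ^ 2 ∈ H := Subgroup.subset_closure (by simp)
  -- key conjugation identities
  have key1 : a * (a * b * a) * a⁻¹ = b := by
    rw [(show a * (a * b * a) * a⁻¹ = (a * a) * b * (a * a⁻¹) by group), haa, mul_inv_cancel,
      one_mul, mul_one]
  have key2 : a * b * a⁻¹ = a * b * a := by rw [hinv]
  have key3 : a * c ^ 2 * a⁻¹ = (a * b * a)⁻¹ * b⁻¹ := by
    rw [hinv, hc, pow_two,
      (show a * (b⁻¹ * a * (b⁻¹ * a)) * a = (a * b⁻¹ * a * b⁻¹) * (a * a) by group), haa,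
      mul_one, mul_inv_rev, mul_inv_rev, hinv]
    group
  -- H is normal
  have hstep : ∀ n ∈ H, a * n * a⁻¹ ∈ H := by
    have : H ≤ Subgroup.comap ((MulAut.conj a).toMonoidHom) H := by
      rw [hH]
      apply Subgroup.closure_le _ |>.mpr
      intro x hx
      simp only [Set.mem_insert_iff, Set.mem_singleton_iff] at hx
      rcases hx with rfl | rfl | rfl
      · simpa [Subgroup.mem_comap, MulAut.conj_apply, key1] using hmem2
      · simpa [Subgroup.mem_comap, MulAut.conj_apply, key2] using hmem1
      · simpa [Subgroup.mem_comap, MulAut.conj_apply, key3] using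
          H.mul_mem (H.inv_mem hmem1) (H.inv_mem hmem2)
    intro n hn
    simpa [MulAut.conj_apply] using this hn
  have hN : H.Normal := by
    rw [← Subgroup.normalizer_eq_top_iff, eq_top_iff, ← hgen]
    apply Subgroup.closure_le _ |>.mpr
    intro x hx
    have hamem : a ∈ Subgroup.normalizer (H : Set G) := by
      rw [Subgroup.mem_normalizer_iff]
      intro n
      constructor
      · exact hstep n
      · intro h
        have := hstep _ h
        simpa [hinv, show a * (a * n * a) * a = n by
          rw [(show a * (a * n * a) * a = (a*a) * n * (a*a) by group), haa, one_mul, mul_one]]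
          using this
    have hbmem : b ∈ Subgroup.normalizer (H : Set G) := Subgroup.le_normalizer hmem2
    simp only [Set.mem_insert_iff, Set.mem_singleton_iff] at hx
    rcases hx with rfl | rfl | rfl
    · exact hamem
    · exact hbmem
    · rw [hc]; exact mul_mem (inv_mem hbmem) hamem
  -- the quotient has at most two elements
  have hidx : H.index ≤ 2 := by
    have hsurj : Function.Surjective (fun i : Fin 2 => if i = 0 then (1 : G ⧸ H)
        else ((a : G ⧸ H))) := by
      intro q
      obtain ⟨g, rfl⟩ := QuotientGroup.mk_surjective q
      have hg : g ∈ Subgroup.closure {a, b, c} := hgen ▸ Subgroup.mem_top g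
      have key : ((g : G ⧸ H) = 1) ∨ ((g : G ⧸ H) = (a : G ⧸ H)) := by
        induction hg using Subgroup.closure_induction with
        | mem x hx =>
          simp only [Set.mem_insert_iff, Set.mem_singleton_iff] at hx
          rcases hx with rfl | rfl | rfl
          · right; rfl
          · left; exact (QuotientGroup.eq_one_iff _).mpr hmem2
          · right
            rw [hc]
            have hb1 : ((b : G ⧸ H))⁻¹ = 1 := by
              rw [inv_eq_one, QuotientGroup.eq_one_iff]; exact hmem2
            calc ((b⁻¹ * a : G) : G ⧸ H) = ((b : G ⧸ H))⁻¹ * (a : G ⧸ H) := by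
                  rw [QuotientGroup.mk_mul, QuotientGroup.mk_inv]
              _ = (a : G ⧸ H) := by rw [hb1, one_mul]
        | one => left; rfl
        | mul x y hx hy ihx ihy =>
          rw [QuotientGroup.mk_mul]
          rcases ihx with h1 | h1 <;> rcases ihy with h2 | h2 <;> rw [h1, h2]
          · left; rw [one_mul]
          · right; rw [one_mul]
          · right; rw [mul_one]
          · left
            rw [← QuotientGroup.mk_mul, haa]
            rfl
        | inv x hx ihx =>
          rw [QuotientGroup.mk_inv]
          rcases ihx with h1 | h1 <;> rw [h1]
          · left; rw [inv_one]
          · right; rw [← QuotientGroup.mk_inv, hinv]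
      rcases key with h | h
      · exact ⟨0, by simpa using h.symm⟩
      · exact ⟨1, by simpa using h.symm⟩
    calc H.index = Nat.card (G ⧸ H) := rfl
      _ ≤ Nat.card (Fin 2) := Nat.card_le_card_of_surjective (α := Fin 2) _ hsurj
      _ = 2 := by simp
  refine ⟨?_, hidx, ?_⟩
  · rw [hc, pow_two,
      (show a * b * a * b * (b⁻¹ * a * (b⁻¹ * a)) = a * b * (a * a) * b⁻¹ * a by group),
      haa, mul_one, (show a * b * b⁻¹ * a = a * a by group), haa]
  · intro _ hb hcord
    have hconj : SemiconjBy a b (a * b * a) := by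
      unfold SemiconjBy
      rw [(show a * b * a * a = a * b * (a * a) by group), haa, mul_one]
    refine ⟨?_, hb, ?_⟩
    · rw [← hconj.orderOf_eq a, hb]
    · rw [orderOf_pow' c (two_ne_zero), hcord]
      decide
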